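/- Let C be a partially cyclically ordered abelian group such that for all nonzero non-isolated x, y: x <_0 y ⟺ -y <_0 -x. Suppose x, y are non-isolated and their infimum z = x ∧_0 y in (A(C), ≤_0) exists. Then x - z and y - z are non-isolated, and the infimum (x - z) ∧_0 (y - z) exists and equals 0. -/
import Mathlib


/-- The relation `y ≤_x z` of a partially cyclically ordered group. -/
def cyclicLE {C : Type*} [AddCommGroup C] (R : C → C → C → Prop) (x y z : C) : Prop :=
  R x y z ∨ y = z ∨ y = x

/-- `R` makes the abelian group `C` a partially cyclically ordered group. -/
def IsPCO {C : Type*} [AddCommGroup C] (R : C → C → C → Prop) : Prop :=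
  (∀ x y z : C, R x y z → x ≠ y ∧ y ≠ z ∧ z ≠ x) ∧
  (∀ x y z : C, R x y z → R y z x) ∧
  (∀ x y z v : C, R x y z → R (x + v) (y + v) (z + v)) ∧
  (∀ x : C, (∀ y z : C, cyclicLE R x y z → cyclicLE R x z y → y = z) ∧
    (∀ y z w : C, cyclicLE R x y z → cyclicLE R x z w → cyclicLE R x y w))

/-- The set `A(C)` of non-isolated elements of `C` (together with `0`). -/
def nonIsol {C : Type*} [AddCommGroup C] (R : C → C → C → Prop) : Set C :=
  {x | x = 0 ∨ ∃ y ≠ (0 : C), R 0 x y ∨ R 0 y x}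

/-- `z` is the infimum of `a` and `b` in `(A(C), ≤₀)`. -/
def IsInf0 {C : Type*} [AddCommGroup C] (R : C → C → C → Prop) (a b z : C) : Prop :=
  z ∈ nonIsol R ∧ cyclicLE R 0 z a ∧ cyclicLE R 0 z b ∧
    ∀ w ∈ nonIsol R, cyclicLE R 0 w a → cyclicLE R 0 w b → cyclicLE R 0 w z

/-- If `x <₀ y ⟺ -y <₀ -x` holds on nonzero non-isolated elements, and `x, y` are
non-isolated with infimum `z = x ∧₀ y`, then `x - z` and `y - z` are non-isolated
and `(x - z) ∧₀ (y - z) = 0`. -/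
theorem stmt17 {C : Type*} [AddCommGroup C] (R : C → C → C → Prop)
    (hR : IsPCO R)
    (hsym : ∀ x y : C, x ∈ nonIsol R → y ∈ nonIsol R → x ≠ 0 → y ≠ 0 →
      (R 0 x y ↔ R 0 (-y) (-x)))
    (x y z : C) (hx : x ∈ nonIsol R) (hy : y ∈ nonIsol R)
    (hz : IsInf0 R x y z) :
    x - z ∈ nonIsol R ∧ y - z ∈ nonIsol R ∧ IsInf0 R (x - z) (y - z) 0 := by
  obtain ⟨hstrict, hcyc, hcomp, hord⟩ := hR
  obtain ⟨hzA, hzx, hzy, hzmin⟩ := hz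
  have cyc2 : ∀ a b c : C, R a b c → R c a b := fun a b c h => hcyc _ _ _ (hcyc _ _ _ h)
  -- from R 0 z a get R 0 (a - z) (-z)
  have key1 : ∀ a : C, R 0 z a → R 0 (a - z) (-z) := by
    intro a h
    have h2 : R (-z) 0 (a - z) := by
      simpa [sub_eq_add_neg] using hcomp 0 z a (-z) h
    exact hcyc _ _ _ h2
  -- from w ≤₀ 0 conclude w = 0
  have le0 : ∀ w : C, cyclicLE R 0 w 0 → w = 0 := by
    intro w h
    rcases h with h | h | h
    · exact absurd rfl (hstrict _ _ _ h).2.2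
    · exact h
    · exact h
  -- non-isolation of a - z
  have hmemsub : ∀ a : C, a ∈ nonIsol R → cyclicLE R 0 z a → a - z ∈ nonIsol R := by
    intro a ha hza
    rcases hza with h | h | h
    · exact Or.inr ⟨-z, neg_ne_zero.mpr (Ne.symm (hstrict _ _ _ h).1), Or.inl (key1 a h)⟩
    · exact Or.inl (by rw [h, sub_self])
    · rw [h, sub_zero]; exact ha
  refine ⟨hmemsub x hx hzx, hmemsub y hy hzy, Or.inl rfl, Or.inr (Or.inr rfl),
    Or.inr (Or.inr rfl), ?_⟩
  intro w hwA hwx hwy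
  rcases hzx with hRx | hxz | hz0
  · rcases hzy with hRy | hyz | hz0
    · -- main case : R 0 z x and R 0 z y
      have hz0 : z ≠ 0 := Ne.symm (hstrict _ _ _ hRx).1
      have hx0 : x ≠ 0 := (hstrict _ _ _ hRx).2.2
      have hy0 : y ≠ 0 := (hstrict _ _ _ hRy).2.2
      right; left
      by_contra hw0
      by_cases hwz : w + z = 0
      · -- w = -z : contradiction using x
        have hw : w = -z := eq_neg_of_add_eq_zero_left hwz
        have h1 : R 0 (-z) (x - z) := by
          rcases hwx with h | h | h
          · rwa [hw] at h
          · rw [hw] at h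
            exact absurd (sub_eq_neg_self.mp h.symm) hx0
          · exact absurd (hw ▸ h) hw0
        -- translate by z : R z 0 x
        have h2 := hcomp 0 (-z) (x - z) z h1
        simp only [zero_add, neg_add_cancel, sub_add_cancel] at h2
        -- antisymmetry in ≤ₓ with R 0 z x
        have h3 : cyclicLE R x 0 z := Or.inl (cyc2 _ _ _ hRx)
        have h4 : cyclicLE R x z 0 := Or.inl (cyc2 _ _ _ h2)
        exact hz0 ((hord x).1 z 0 h4 h3)
      · -- w + z ≠ 0 : show w + z is a lower bound of x and y
        have step : ∀ a : C, a ≠ 0 → R 0 z a → cyclicLE R 0 w (a - z) →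
            cyclicLE R 0 (w + z) a := by
          intro a ha0 hRa h
          rcases h with h | h | h
          · have h2 := hcomp 0 w (a - z) z h
            simp only [zero_add, sub_add_cancel] at h2
            -- h2 : R z (w + z) a
            have h3 : cyclicLE R a 0 z := Or.inl (cyc2 _ _ _ hRa)
            have h4 : cyclicLE R a z (w + z) := Or.inl (cyc2 _ _ _ h2)
            have h5 := (hord a).2 0 z (w + z) h3 h4
            rcases h5 with h5 | h5 | h5
            · exact Or.inl (hcyc _ _ _ h5)
            · exact absurd h5.symm hwz
            · exact absurd h5.symm ha0
          · exact Or.inr (Or.inl (by rw [h, sub_add_cancel]))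
          · exact absurd h hw0
        have cx := step x hx0 hRx hwx
        have cy := step y hy0 hRy hwy
        have hmem : w + z ∈ nonIsol R := by
          rcases cx with h | h | h
          · exact Or.inr ⟨x, hx0, Or.inl h⟩
          · rw [h]; exact hx
          · exact absurd h hwz
        have h6 := hzmin (w + z) hmem cx cy
        have h7 : R 0 (w + z) z := by
          rcases h6 with h | h | h
          · exact h
          · exact absurd (add_eq_right.mp h) hw0
          · exact absurd h hwz
        -- translate by -z : R 0 (-z) w
        have h8 : R (-z) w 0 := by
          simpa [add_assoc] using hcomp 0 (w + z) z (-z) h7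
        have h9 : R 0 (-z) w := cyc2 _ _ _ h8
        -- w ≤₀ x - z ≤₀ -z
        have h10 : cyclicLE R 0 (x - z) (-z) := Or.inl (key1 x hRx)
        have h11 := (hord 0).2 w (x - z) (-z) hwx h10
        have h12 : R 0 w (-z) := by
          rcases h11 with h | h | h
          · exact h
          · exact absurd (eq_neg_iff_add_eq_zero.mp h) hwz
          · exact absurd h hw0
        have := (hord 0).1 w (-z) (Or.inl h12) (Or.inl h9)
        exact absurd (eq_neg_iff_add_eq_zero.mp this) hwz
    · -- z = y
      rw [hyz, sub_self] at hwy
      exact Or.inr (Or.inl (le0 w hwy))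
    · -- z = 0
      rw [hz0, sub_zero] at hwx hwy
      exact Or.inr (Or.inl (le0 w (hz0 ▸ hzmin w hwA hwx hwy)))
  · -- z = x
    rw [hxz, sub_self] at hwx
    exact Or.inr (Or.inl (le0 w hwx))
  · -- z = 0
    rw [hz0, sub_zero] at hwx hwy
    exact Or.inr (Or.inl (le0 w (hz0 ▸ hzmin w hwA hwx hwy)))
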